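/- Let $\mathfrak{O}$ be the ring of integers of a finite extension of $\mathbb{Q}_p$ with maximal ideal $\mathfrak{M}$ and residue field of cardinality $q$, and suppose $q > 3$. Let $n \geq 1$ and let $H$ be the subgroup of $\mathrm{SL}_2(\mathfrak{O})$ generated by the upper unipotent matrices $\begin{pmatrix}1 & a \\ 0 & 1\end{pmatrix}$ with $a \in \mathfrak{O}$ and the lower unipotent matrices $\begin{pmatrix}1 & 0 \\ c & 1\end{pmatrix}$ with $c \in \mathfrak{M}^n$. Then the intersection of $H$ with the diagonal torus $\{\mathrm{diag}(t, t^{-1}) : t \in \mathfrak{O}^{\times}\}$ equals $\{\mathrm{diag}(t, t^{-1}) : t \in 1 + \mathfrak{M}^n\}$, and moreover $H = \begin{pmatrix} 1+\mathfrak{M}^n & \mathfrak{O} \\ \mathfrak{M}^n & 1+\mathfrak{M}^n \end{pmatrix} \cap \mathrm{SL}_2(\mathfrak{O})$. -/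

import Mathlib

open IsLocalRing

section aux
variable {R : Type*} [CommRing R]

/-- Upper unipotent matrix. -/
def upMat (x : R) : Matrix.SpecialLinearGroup (Fin 2) R :=
  ⟨!![1, x; 0, 1], by simp [Matrix.det_fin_two_of]⟩

/-- Lower unipotent matrix. -/
def loMat (y : R) : Matrix.SpecialLinearGroup (Fin 2) R :=
  ⟨!![1, 0; y, 1], by simp [Matrix.det_fin_two_of]⟩

@[simp] lemma upMat_apply (x : R) (i j : Fin 2) : upMat x i j = !![1, x; 0, 1] i j := rfl
@[simp] lemma loMat_apply (y : R) (i j : Fin 2) : loMat y i j = !![1, 0; y, 1] i j := rfl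

lemma upMat_coe (x : R) :
    (upMat x : Matrix (Fin 2) (Fin 2) R) = !![1, x; 0, 1] := rfl
lemma loMat_coe (y : R) :
    (loMat y : Matrix (Fin 2) (Fin 2) R) = !![1, 0; y, 1] := rfl

lemma sl2_mul_apply (g h : Matrix.SpecialLinearGroup (Fin 2) R) (i j : Fin 2) :
    (g * h) i j = g i 0 * h 0 j + g i 1 * h 1 j := by
  show ((g : Matrix (Fin 2) (Fin 2) R) * (h : Matrix (Fin 2) (Fin 2) R)) i j = _
  rw [Matrix.mul_apply, Fin.sum_univ_two]

lemma sl2_decomp (g : Matrix.SpecialLinearGroup (Fin 2) R) {A : R}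
    (ha' : g 0 0 * A = 1) :
    g = loMat (g 1 0 * A) * upMat 1 * loMat (g 0 0 - 1) * upMat (-A) *
        loMat (-((g 0 0 - 1) * g 0 0)) * upMat (A * g 0 1) := by
  have hdet : g 0 0 * g 1 1 - g 0 1 * g 1 0 = 1 := by
    have := g.prop
    rwa [Matrix.det_fin_two] at this
  set a := g 0 0 with ha; set b := g 0 1 with hb; set c := g 1 0 with hcc
  set d := g 1 1 with hd
  apply Subtype.ext
  have e : (g : Matrix (Fin 2) (Fin 2) R) = !![a, b; c, d] := Matrix.eta_fin_two _
  show (g : Matrix (Fin 2) (Fin 2) R) = _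
  rw [e]
  simp only [Matrix.SpecialLinearGroup.coe_mul, upMat_coe, loMat_coe, Matrix.mul_fin_two]
  ext i j
  fin_cases i <;> fin_cases j <;> simp
  · linear_combination (-(a^2) + a) * ha'
  · linear_combination (-(a^2*A*b) + a*A*b - b + 1) * ha'
  · linear_combination (-(a^2*A*c) - a^2 + a*A*c + 2*a - c - 1) * ha'
  · linear_combination
      (-(a^2*A^2*b*c) - a^2*A*b + a*A^2*b*c + 2*a*A*b - A*b*c - A*b + A*c - d + 1) * ha'
        + A * hdet

end aux

/-- let `𝒪` be the ring of integers of a finite extension of `ℚ_p` (modelled as a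
discrete valuation ring) with maximal ideal `𝔐` and residue field of cardinality `q > 3`.
For `n ≥ 1`, let `H ≤ SL₂(𝒪)` be the subgroup generated by the upper unipotent matrices
`(1, a; 0, 1)`, `a ∈ 𝒪`, and the lower unipotent matrices `(1, 0; c, 1)`, `c ∈ 𝔐ⁿ`.
Then `H = (1 + 𝔐ⁿ, 𝒪; 𝔐ⁿ, 1 + 𝔐ⁿ) ∩ SL₂(𝒪)`, and in particular the intersection of `H`
with the diagonal torus is `{diag(t, t⁻¹) : t ∈ 1 + 𝔐ⁿ}`. -/
theorem stmt7 (𝒪 : Type*) [CommRing 𝒪] [IsDomain 𝒪] [IsDiscreteValuationRing 𝒪]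
    (hq : 3 < Nat.card (ResidueField 𝒪)) (n : ℕ) (hn : 1 ≤ n) :
    ∀ g : Matrix.SpecialLinearGroup (Fin 2) 𝒪,
      (g ∈ Subgroup.closure
        ({g' : Matrix.SpecialLinearGroup (Fin 2) 𝒪 |
            g' 0 0 = 1 ∧ g' 1 1 = 1 ∧ g' 1 0 = 0} ∪
         {g' : Matrix.SpecialLinearGroup (Fin 2) 𝒪 |
            g' 0 0 = 1 ∧ g' 1 1 = 1 ∧ g' 0 1 = 0 ∧ g' 1 0 ∈ maximalIdeal 𝒪 ^ n}) ↔
        (g 0 0 - 1 ∈ maximalIdeal 𝒪 ^ n ∧ g 1 1 - 1 ∈ maximalIdeal 𝒪 ^ n ∧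
          g 1 0 ∈ maximalIdeal 𝒪 ^ n)) ∧
      ((g 0 1 = 0 ∧ g 1 0 = 0) →
        (g ∈ Subgroup.closure
          ({g' : Matrix.SpecialLinearGroup (Fin 2) 𝒪 |
              g' 0 0 = 1 ∧ g' 1 1 = 1 ∧ g' 1 0 = 0} ∪
           {g' : Matrix.SpecialLinearGroup (Fin 2) 𝒪 |
              g' 0 0 = 1 ∧ g' 1 1 = 1 ∧ g' 0 1 = 0 ∧ g' 1 0 ∈ maximalIdeal 𝒪 ^ n}) ↔
          g 0 0 - 1 ∈ maximalIdeal 𝒪 ^ n)) := by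
  set I : Ideal 𝒪 := maximalIdeal 𝒪 ^ n with hI
  set S : Set (Matrix.SpecialLinearGroup (Fin 2) 𝒪) :=
    ({g' : Matrix.SpecialLinearGroup (Fin 2) 𝒪 |
        g' 0 0 = 1 ∧ g' 1 1 = 1 ∧ g' 1 0 = 0} ∪
     {g' : Matrix.SpecialLinearGroup (Fin 2) 𝒪 |
        g' 0 0 = 1 ∧ g' 1 1 = 1 ∧ g' 0 1 = 0 ∧ g' 1 0 ∈ I}) with hS
  have main : ∀ g : Matrix.SpecialLinearGroup (Fin 2) 𝒪,
      g ∈ Subgroup.closure S ↔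
        (g 0 0 - 1 ∈ I ∧ g 1 1 - 1 ∈ I ∧ g 1 0 ∈ I) := by
    intro g
    constructor
    · intro hg
      refine Subgroup.closure_induction (k := S)
        (p := fun x _ => x 0 0 - 1 ∈ I ∧ x 1 1 - 1 ∈ I ∧ x 1 0 ∈ I) ?_ ?_ ?_ ?_ hg
      · rintro x (⟨h1, h2, h3⟩ | ⟨h1, h2, _, h4⟩)
        · exact ⟨by simp [h1], by simp [h2], by simp [h3]⟩
        · exact ⟨by simp [h1], by simp [h2], h4⟩
      · refine ⟨?_, ?_, ?_⟩ <;> simp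
      · intro x y _ _ ⟨hx1, hx2, hx3⟩ ⟨hy1, hy2, hy3⟩
        refine ⟨?_, ?_, ?_⟩
        · have h : (x * y) 0 0 - 1 =
              (x 0 0 - 1) * y 0 0 + (y 0 0 - 1) + x 0 1 * y 1 0 := by
            rw [sl2_mul_apply]; ring
          rw [h]
          exact add_mem (add_mem (Ideal.mul_mem_right _ _ hx1) hy1)
            (Ideal.mul_mem_left _ _ hy3)
        · have h : (x * y) 1 1 - 1 =
              x 1 0 * y 0 1 + (x 1 1 - 1) * y 1 1 + (y 1 1 - 1) := by
            rw [sl2_mul_apply]; ring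
          rw [h]
          exact add_mem (add_mem (Ideal.mul_mem_right _ _ hx3)
            (Ideal.mul_mem_right _ _ hx2)) hy2
        · have h : (x * y) 1 0 = x 1 0 * y 0 0 + x 1 1 * y 1 0 := sl2_mul_apply x y 1 0
          rw [h]
          exact add_mem (Ideal.mul_mem_right _ _ hx3) (Ideal.mul_mem_left _ _ hy3)
      · intro x _ ⟨hx1, hx2, hx3⟩
        have hinv := Matrix.SpecialLinearGroup.SL2_inv_expl x
        refine ⟨?_, ?_, ?_⟩
        · have : x⁻¹ 0 0 = x 1 1 := by rw [hinv]; rfl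
          rw [this]; exact hx2
        · have : x⁻¹ 1 1 = x 0 0 := by rw [hinv]; rfl
          rw [this]; exact hx1
        · have : x⁻¹ 1 0 = -x 1 0 := by rw [hinv]; rfl
          rw [this]; exact neg_mem hx3
    · rintro ⟨h1, h2, h3⟩
      -- `g 0 0` is a unit
      have hmax : g 0 0 - 1 ∈ maximalIdeal 𝒪 := by
        have hle : I ≤ maximalIdeal 𝒪 := by
          rw [hI]; exact Ideal.pow_le_self (by omega)
        exact hle h1
      have hu : IsUnit (g 0 0) := by
        by_contra h
        have hmem : g 0 0 ∈ maximalIdeal 𝒪 := (mem_maximalIdeal _).2 h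
        have hone : (1 : 𝒪) ∈ maximalIdeal 𝒪 := by
          have := sub_mem hmem hmax
          simpa using this
        exact (maximalIdeal.isMaximal 𝒪).ne_top (Ideal.eq_top_of_isUnit_mem _ hone isUnit_one)
      obtain ⟨u, hu'⟩ := hu
      have ha' : g 0 0 * (↑u⁻¹ : 𝒪) = 1 := by
        rw [← hu']; exact u.mul_inv
      have hdec := sl2_decomp g ha'
      rw [hdec]
      have memU : ∀ x : 𝒪, upMat x ∈ Subgroup.closure S := fun x =>
        Subgroup.subset_closure (Or.inl ⟨by simp, by simp, by simp⟩)
      have memL : ∀ y : 𝒪, y ∈ I → loMat y ∈ Subgroup.closure S := fun y hy =>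
        Subgroup.subset_closure (Or.inr ⟨by simp, by simp, by simp, by simpa using hy⟩)
      exact mul_mem (mul_mem (mul_mem (mul_mem (mul_mem
        (memL _ (Ideal.mul_mem_right _ _ h3)) (memU 1))
        (memL _ h1)) (memU _))
        (memL _ (neg_mem (Ideal.mul_mem_right _ _ h1)))) (memU _)
  intro g
  refine ⟨main g, ?_⟩
  rintro ⟨hb, hc⟩
  rw [main g]
  constructor
  · exact fun h => h.1
  · intro h1
    refine ⟨h1, ?_, by rw [hc]; exact zero_mem _⟩
    have hdet : g 0 0 * g 1 1 - g 0 1 * g 1 0 = 1 := by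
      have := g.prop; rwa [Matrix.det_fin_two] at this
    have h : g 1 1 - 1 = -(g 1 1) * (g 0 0 - 1) := by
      rw [hb, hc] at hdet; linear_combination hdet
    rw [h]
    exact Ideal.mul_mem_left _ _ h1
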